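/- For every n ∈ ℙ, ∑_{β ∈ B_n} (-1)^{N_1(β)} q^{fmaj(β)} = [2]_{-q} [4]_{-q} ⋯ [2n]_{-q}. -/

import Mathlib

open Finset Polynomial

/-- The hyperoctahedral group `B n`, modeled as pairs (permutation, sign vector):
the signed permutation with window `β(i) = ±(σ(i)+1)`. -/
abbrev Bgrp (n : ℕ) := Equiv.Perm (Fin n) × (Fin n → Bool)

/-- The window entry `β(i)` (a nonzero integer). -/
def wdw {n : ℕ} (β : Bgrp n) (i : Fin n) : ℤ :=
  (if β.2 i then -1 else 1) * ((β.1 i : ℤ) + 1)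

/-- Window entry at a `ℕ` position (0-based), `0` out of range. -/
def wdwN {n : ℕ} (β : Bgrp n) (i : ℕ) : ℤ :=
  if h : i < n then wdw β ⟨i, h⟩ else 0

/-- Number of inversions of the window. -/
def invB {n : ℕ} (β : Bgrp n) : ℕ :=
  ((univ : Finset (Fin n × Fin n)).filter
    (fun p => p.1 < p.2 ∧ wdw β p.2 < wdw β p.1)).card

/-- The set of positions with negative entries. -/
def NegB {n : ℕ} (β : Bgrp n) : Finset (Fin n) :=
  univ.filter (fun i => wdw β i < 0)

def N1 {n : ℕ} (β : Bgrp n) : ℕ := (NegB β).card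

def N2 {n : ℕ} (β : Bgrp n) : ℕ :=
  ((univ : Finset (Fin n × Fin n)).filter
    (fun p => p.1 < p.2 ∧ wdw β p.1 + wdw β p.2 < 0)).card

/-- The order `-1 ≺ -2 ≺ ⋯ ≺ -n ≺ 1 ≺ 2 ≺ ⋯ ≺ n` on nonzero integers. -/
def precLt (a b : ℤ) : Prop :=
  (a < 0 ∧ b < 0 ∧ b < a) ∨ (a < 0 ∧ 0 < b) ∨ (0 < a ∧ 0 < b ∧ a < b)

instance (a b : ℤ) : Decidable (precLt a b) := by unfold precLt; infer_instance

/-- Descent set of the window, with respect to `≺` (0-based positions). -/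
def DesB {n : ℕ} (β : Bgrp n) : Finset ℕ :=
  (range (n-1)).filter (fun i => precLt (wdwN β (i+1)) (wdwN β i))

/-- Major index: sum of the (1-based) descent positions. -/
def majB {n : ℕ} (β : Bgrp n) : ℕ := ∑ i ∈ DesB β, (i+1)

/-- Flag-major index. -/
def fmaj {n : ℕ} (β : Bgrp n) : ℕ := 2 * majB β + N1 β

/-- Group multiplication (composition of signed permutations). -/
def bmul {n : ℕ} (β γ : Bgrp n) : Bgrp n :=
  (β.1 * γ.1, fun i => xor (γ.2 i) (β.2 (γ.1 i)))

/-- The identity signed permutation. -/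
def bone (n : ℕ) : Bgrp n := (1, fun _ => false)

/-- The Coxeter generators `s_0, s_1, …, s_{n-1}` of `B n`. -/
def BGens (n : ℕ) : Set (Bgrp n) :=
  { b | (∃ h : 0 < n, b = ((1 : Equiv.Perm (Fin n)), fun j => decide (j = (⟨0, h⟩ : Fin n)))) ∨
        (∃ (i : ℕ) (h : i + 1 < n),
          b = (Equiv.swap ⟨i, Nat.lt_of_succ_lt h⟩ ⟨i+1, h⟩, fun _ => false)) }

/-- Minimal length of an expression of `β` as a product of the generators of `B n`. -/
noncomputable def lenB {n : ℕ} (β : Bgrp n) : ℕ :=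
  sInf {k | ∃ l : List (Bgrp n), l.length = k ∧ (∀ g ∈ l, g ∈ BGens n) ∧
    l.foldr bmul (bone n) = β}

/-- The Coxeter generators `s_0^D, s_1, …, s_{n-1}` of `D n`. -/
def DGens (n : ℕ) : Set (Bgrp n) :=
  { b | (∃ h : 1 < n,
          b = (Equiv.swap ⟨0, Nat.lt_of_succ_lt h⟩ ⟨1, h⟩, fun (j : Fin n) => decide ((j : ℕ) < 2))) ∨
        (∃ (i : ℕ) (h : i + 1 < n),
          b = (Equiv.swap ⟨i, Nat.lt_of_succ_lt h⟩ ⟨i+1, h⟩, fun _ => false)) }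

/-- Minimal length of an expression as a product of the generators of `D n`. -/
noncomputable def lenD {n : ℕ} (β : Bgrp n) : ℕ :=
  sInf {k | ∃ l : List (Bgrp n), l.length = k ∧ (∀ g ∈ l, g ∈ DGens n) ∧
    l.foldr bmul (bone n) = β}

/-- The even-signed permutation group `D n` as a finset of `B n`. -/
def Dgrp (n : ℕ) : Finset (Bgrp n) := univ.filter (fun γ => Even (N1 γ))

/-- `Δ_n = {γ ∈ B_n : γ(n) > 0}`. -/
def DeltaSet (n : ℕ) : Finset (Bgrp n) := univ.filter (fun γ => 0 < wdwN γ (n-1))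

/-- `|γ|_n`: replace the last window entry by its absolute value. -/
def absLast {n : ℕ} (γ : Bgrp n) : Bgrp n :=
  (γ.1, fun i => if (i : ℕ) = n - 1 then false else γ.2 i)

/-- The `D`-major index. -/
def Dmaj {n : ℕ} (γ : Bgrp n) : ℕ := fmaj (absLast γ)

/-- `-β`: negate all window entries. -/
def negB {n : ℕ} (β : Bgrp n) : Bgrp n := (β.1, fun i => !β.2 i)

/-- Number of inversions of a permutation of `Fin n`. -/
def invS {n : ℕ} (σ : Equiv.Perm (Fin n)) : ℕ :=
  ((univ : Finset (Fin n × Fin n)).filter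
    (fun p => p.1 < p.2 ∧ σ p.2 < σ p.1)).card

/-- Major index of a permutation of `Fin n` (usual order). -/
def majS {n : ℕ} (σ : Equiv.Perm (Fin n)) : ℕ :=
  ∑ i ∈ (range (n-1)).filter
      (fun i => ∀ h : i + 1 < n, σ ⟨i+1, h⟩ < σ ⟨i, Nat.lt_of_succ_lt h⟩), (i+1)

/-- The `q`-analogue `[m]_q = 1 + q + ⋯ + q^{m-1}`, evaluated at a polynomial `q`. -/
noncomputable def qpoly (m : ℕ) (q : Polynomial ℤ) : Polynomial ℤ := ∑ k ∈ range m, q ^ k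

namespace S7

lemma precLt_trans {a b c : ℤ} (h1 : precLt a b) (h2 : precLt b c) : precLt a c := by
  unfold precLt at *; omega

/-- major index of a word -/
def majL (l : List ℤ) : ℕ :=
  ∑ i ∈ range (l.length - 1), if precLt (l.getD (i+1) 0) (l.getD i 0) then i + 1 else 0

lemma majL_nil : majL [] = 0 := by simp [majL]

lemma majL_singleton (a : ℤ) : majL [a] = 0 := by simp [majL]

lemma getD_append_lt (v w : List ℤ) (i : ℕ) (h : i < v.length) :
    (v ++ w).getD i 0 = v.getD i 0 := by
  rw [List.getD_eq_getElem _ _ (by simp; omega), List.getD_eq_getElem _ _ h,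
    List.getElem_append_left h]

lemma majL_append (v : List ℤ) (b : ℤ) (hv : v ≠ []) :
    majL (v ++ [b]) = majL v +
      (if precLt b (v.getD (v.length - 1) 0) then v.length else 0) := by
  have hL : 1 ≤ v.length := List.length_pos_iff.2 hv
  have hlen : (v ++ [b]).length = v.length + 1 := by simp
  unfold majL
  rw [hlen]
  have h1 : v.length + 1 - 1 = (v.length - 1) + 1 := by omega
  rw [h1, Finset.sum_range_succ]
  congr 1
  · apply Finset.sum_congr rfl
    intro i hi
    simp only [Finset.mem_range] at hi
    rw [getD_append_lt _ _ _ (by omega), getD_append_lt _ _ _ (by omega)]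
  · have h2 : v.length - 1 + 1 = v.length := by omega
    rw [h2]
    have h3 : (v ++ [b]).getD v.length 0 = b := by
      rw [List.getD_eq_getElem _ _ (by simp), List.getElem_append_right (by omega)]
      simp
    rw [h3, getD_append_lt _ _ _ (by omega)]


lemma insertIdx_append_of_le (x : ℤ) (u : List ℤ) :
    ∀ (w : List ℤ) (j : ℕ), j ≤ w.length →
      (w ++ u).insertIdx j x = (w.insertIdx j x) ++ u := by
  intro w
  induction w with
  | nil =>
    intro j hj
    simp only [List.length_nil, Nat.le_zero] at hj
    subst hj; simp
  | cons c w ih =>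
    intro j hj
    cases j with
    | zero => simp
    | succ j => simp only [List.cons_append, List.insertIdx_succ_cons, List.cons_append,
        ih j (by simpa using hj)]

lemma length_insertIdx' (w : List ℤ) (x : ℤ) (j : ℕ) (h : j ≤ w.length) :
    (w.insertIdx j x).length = w.length + 1 := List.length_insertIdx_of_le_length h x

lemma insertIdx_ne_nil (w : List ℤ) (x : ℤ) (j : ℕ) (h : j ≤ w.length) :
    w.insertIdx j x ≠ [] := by
  have := length_insertIdx' w x j h
  intro hc; rw [hc] at this; simp at this

lemma getD_insertIdx_last (w : List ℤ) (x : ℤ) (j : ℕ) (h : j < w.length) :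
    (w.insertIdx j x).getD w.length 0 = w.getD (w.length - 1) 0 := by
  have hk : j + (w.length - 1 - j) < w.length := by omega
  have h1 := List.getElem_insertIdx_add_succ w x j (w.length - 1 - j) hk
  rw [List.getD_eq_getElem _ _ (by rw [length_insertIdx' w x j (le_of_lt h)]; omega),
    List.getD_eq_getElem _ _ (show w.length - 1 < w.length by omega)]
  convert h1 using 2 <;> omega

theorem key (x : ℤ) (q : Polynomial ℤ) :
    ∀ w : List ℤ, (∀ a ∈ w, (precLt a x ↔ ¬ precLt x a)) →
    ∑ j ∈ range (w.length + 1), q ^ majL (w.insertIdx j x) =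
      q ^ majL w * ∑ k ∈ range (w.length + 1), q ^ k := by
  intro w
  induction w using List.reverseRecOn with
  | nil => simp [majL]
  | append_singleton w a ih =>
    intro h
    have hax : precLt a x ↔ ¬ precLt x a := h a (by simp)
    rcases eq_or_ne w [] with rfl | hw
    · -- base-ish case: word = [a]
      simp only [List.nil_append, List.length_singleton]
      rw [Finset.sum_range_succ, Finset.sum_range_one,
        show (1:ℕ) + 1 = 2 from rfl]
      have e0 : ([a].insertIdx 0 x) = [x, a] := by simp
      have e1 : ([a].insertIdx 1 x) = [a, x] := by
        have := List.insertIdx_length_self (l := [a]) (x := x)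
        simpa using this
      rw [e0, e1]
      have m0 : majL [a] = 0 := by simp [majL]
      have m1 : majL [x, a] = if precLt a x then 1 else 0 := by
        simp [majL]
      have m2 : majL [a, x] = if precLt x a then 1 else 0 := by
        simp [majL]
      rw [m0, m1, m2]
      rw [show range 2 = {0, 1} from rfl]
      rw [Finset.sum_insert (by simp), Finset.sum_singleton]
      by_cases hxa : precLt x a
      · rw [if_pos hxa, if_neg (fun hc => (hax.mp hc) hxa)]; ring
      · rw [if_neg hxa, if_pos (hax.2 hxa)]; ring
    · -- main case
      replace ih := ih (fun b hb => h b (by simp [hb]))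
      set L := w.length with hLdef
      have hL : 1 ≤ L := List.length_pos_iff.2 hw
      set wl := w.getD (L - 1) 0 with hwl
      have hlen : (w ++ [a]).length = L + 1 := by simp [hLdef]
      have hwx : w.insertIdx L x = w ++ [x] := List.insertIdx_length_self (l := w) (x := x)
      have hwxlast : (w ++ [x]).getD ((w ++ [x]).length - 1) 0 = x := by
        rw [List.getD_eq_getElem _ _ (by simp)]
        rw [List.getElem_append_right (by simp)]
        simp
      have hwalast : (w ++ [a]).getD ((w ++ [a]).length - 1) 0 = a := by
        rw [List.getD_eq_getElem _ _ (by simp)]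
        rw [List.getElem_append_right (by simp)]
        simp
      have hwxlen : (w ++ [x]).length = L + 1 := by simp [hLdef]
      have hwMaj : majL (w.insertIdx L x) = majL w + (if precLt x wl then L else 0) := by
        rw [hwx, majL_append w x hw]
      have maj_mid : ∀ j ∈ range L, majL ((w ++ [a]).insertIdx j x)
          = majL (w.insertIdx j x) + (if precLt a wl then L + 1 else 0) := by
        intro j hj
        rw [Finset.mem_range] at hj
        rw [insertIdx_append_of_le x [a] w j (le_of_lt hj),
          majL_append _ _ (insertIdx_ne_nil w x j (le_of_lt hj)),
          length_insertIdx' w x j (le_of_lt hj)]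
        simp only [Nat.add_sub_cancel]
        rw [getD_insertIdx_last w x j hj]
      have maj_L : majL ((w ++ [a]).insertIdx L x)
          = majL w + (if precLt x wl then L else 0) + (if precLt a x then L + 1 else 0) := by
        rw [insertIdx_append_of_le x [a] w L (le_refl _), hwx,
          majL_append (w ++ [x]) a (by simp), majL_append w x hw, hwxlast, hwxlen]
      have maj_top : majL ((w ++ [a]).insertIdx (L + 1) x)
          = majL w + (if precLt a wl then L else 0) + (if precLt x a then L + 1 else 0) := by
        have : (w ++ [a]).insertIdx (L + 1) x = (w ++ [a]) ++ [x] := by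
          have := List.insertIdx_length_self (l := w ++ [a]) (x := x)
          rwa [hlen] at this
        rw [this, majL_append (w ++ [a]) x (by simp), majL_append w a hw, hwalast, hlen]
      -- assemble
      rw [hlen, Finset.sum_range_succ, Finset.sum_range_succ]
      set m := majL w with hm
      set G := ∑ k ∈ range (L + 1), q ^ k with hGdef
      have hsplit : ∑ j ∈ range L, q ^ majL (w.insertIdx j x)
          = q ^ m * G - q ^ (m + (if precLt x wl then L else 0)) := by
        have h2 := ih
        rw [Finset.sum_range_succ, hwMaj] at h2
        exact eq_sub_of_add_eq h2
      have hmid : ∑ j ∈ range L, q ^ majL ((w ++ [a]).insertIdx j x)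
          = (q ^ m * G - q ^ (m + (if precLt x wl then L else 0)))
            * (if precLt a wl then q ^ (L+1) else 1) := by
        rw [← hsplit, Finset.sum_mul]
        refine Finset.sum_congr rfl fun j hj => ?_
        rw [maj_mid j hj, pow_add]
        congr 1
        split_ifs <;> simp
      have maj_wa : majL (w ++ [a]) = m + (if precLt a wl then L else 0) := by
        rw [majL_append w a hw]
      rw [hmid, maj_L, maj_top, maj_wa]
      have hH2 : ∑ k ∈ range (L + 1 + 1), q ^ k = G + q ^ (L + 1) := Finset.sum_range_succ _ _
      have hH1 : ∑ k ∈ range (L + 1 + 1), q ^ k = q * G + 1 := geom_sum_succ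
      by_cases hcL : precLt a wl <;> by_cases hex : precLt x wl
      · -- cL, ex : xa free
        rw [hH1]
        by_cases hxa : precLt a x
        · have hea : ¬ precLt x a := hax.mp hxa
          simp only [if_pos hcL, if_pos hex, if_pos hxa, if_neg hea]
          simp only [pow_add, pow_succ]; ring
        · have hea : precLt x a := by by_contra hc; exact hxa (hax.mpr hc)
          simp only [if_pos hcL, if_pos hex, if_neg hxa, if_pos hea]
          simp only [pow_add, pow_succ]; ring
      · -- cL, ¬ex : forced xa
        have hxa : precLt a x := by
          rcases (em (precLt x a)) with hch | hch
          · exact absurd (precLt_trans hch hcL) hex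
          · exact hax.2 hch
        have hea : ¬ precLt x a := hax.mp hxa
        rw [hH1]
        simp only [if_pos hcL, if_neg hex, if_pos hxa, if_neg hea]
        simp only [pow_add, pow_succ]; ring
      · -- ¬cL, ex : forced ¬xa
        have hxa : ¬ precLt a x := by
          intro hc; exact hcL (precLt_trans hc hex)
        have hea : precLt x a := by by_contra hc; exact hxa (hax.mpr hc)
        rw [hH2]
        simp only [if_neg hcL, if_pos hex, if_neg hxa, if_pos hea]
        simp only [pow_add, pow_succ]; ring
      · -- ¬cL, ¬ex : xa free
        rw [hH2]
        by_cases hxa : precLt a x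
        · have hea : ¬ precLt x a := hax.mp hxa
          simp only [if_neg hcL, if_neg hex, if_pos hxa, if_neg hea]
          simp only [pow_add, pow_succ]; ring
        · have hea : precLt x a := by by_contra hc; exact hxa (hax.mpr hc)
          simp only [if_neg hcL, if_neg hex, if_neg hxa, if_pos hea]
          simp only [pow_add, pow_succ]; ring


def negL (l : List ℤ) : ℕ := l.countP (fun a => decide (a < 0))

lemma negL_eq_sum (l : List ℤ) :
    negL l = ∑ i ∈ range l.length, if l.getD i 0 < 0 then 1 else 0 := by
  induction l with
  | nil => simp [negL]
  | cons a l ih =>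
    rw [negL, List.countP_cons, List.length_cons, Finset.sum_range_succ']
    simp only [List.getD_cons_succ, List.getD_cons_zero]
    rw [← negL, ih]
    simp

lemma negL_insertIdx (w : List ℤ) (x : ℤ) (j : ℕ) (h : j ≤ w.length) :
    negL (w.insertIdx j x) = negL w + (if x < 0 then 1 else 0) := by
  unfold negL
  rw [(List.perm_insertIdx x w h).countP_eq, List.countP_cons]
  simp

def wordB {n : ℕ} (β : Bgrp n) : List ℤ := List.ofFn (wdw β)

@[simp] lemma length_wordB {n : ℕ} (β : Bgrp n) : (wordB β).length = n := by simp [wordB]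

lemma getD_wordB {n : ℕ} (β : Bgrp n) (i : ℕ) : (wordB β).getD i 0 = wdwN β i := by
  by_cases h : i < n
  · unfold wordB
    rw [List.getD_eq_getElem _ _ (by simpa), List.getElem_ofFn, wdwN, dif_pos h]
  · rw [List.getD_eq_default _ _ (by simpa using not_lt.mp h), wdwN, dif_neg h]

lemma majB_eq {n : ℕ} (β : Bgrp n) : majB β = majL (wordB β) := by
  rw [majB, DesB, Finset.sum_filter, majL, length_wordB]
  exact Finset.sum_congr rfl fun i _ => by rw [getD_wordB, getD_wordB]

lemma N1_eq {n : ℕ} (β : Bgrp n) : N1 β = negL (wordB β) := by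
  rw [N1, NegB, Finset.card_filter, negL_eq_sum, length_wordB,
    ← Fin.sum_univ_eq_sum_range (fun i => if (wordB β).getD i 0 < 0 then 1 else 0) n]
  refine Finset.sum_congr rfl fun i _ => ?_
  rw [getD_wordB, wdwN, dif_pos i.isLt]

lemma fmaj_eq {n : ℕ} (β : Bgrp n) : fmaj β = 2 * majL (wordB β) + negL (wordB β) := by
  rw [fmaj, majB_eq, N1_eq]

lemma wordB_entry {n : ℕ} (β : Bgrp n) : ∀ a ∈ wordB β, a ≠ 0 ∧ a.natAbs ≤ n := by
  intro a ha
  rw [wordB, List.mem_ofFn] at ha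
  obtain ⟨i, rfl⟩ := ha
  have hlt : (β.1 i : ℕ) < n := (β.1 i).isLt
  unfold wdw
  split_ifs <;> constructor <;> omega

lemma wordB_injective {n : ℕ} : Function.Injective (wordB (n := n)) := by
  intro β γ h
  rw [wordB, wordB, List.ofFn_inj] at h
  have h' : ∀ i, wdw β i = wdw γ i := fun i => congrFun h i
  have hperm : ∀ i, β.1 i = γ.1 i := by
    intro i
    have := h' i
    unfold wdw at this
    have h1 : (β.1 i : ℕ) < n := (β.1 i).isLt
    have h2 : (γ.1 i : ℕ) < n := (γ.1 i).isLt
    apply Fin.ext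
    split_ifs at this <;> omega
  have hsign : ∀ i, β.2 i = γ.2 i := by
    intro i
    have := h' i
    unfold wdw at this
    rcases hb : β.2 i <;> rcases hg : γ.2 i <;> rw [hb, hg] at this <;> simp at this <;> omega
  exact Prod.ext (Equiv.ext hperm) (funext hsign)

noncomputable def permIns {n : ℕ} (j : Fin (n+1)) (σ : Equiv.Perm (Fin n)) : Equiv.Perm (Fin (n+1)) :=
  Equiv.ofBijective
    (fun p => if h : p.1 < j.1 then (σ ⟨p.1, by have := j.isLt; omega⟩).castSucc
      else if h2 : p.1 = j.1 then Fin.last n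
      else (σ ⟨p.1 - 1, by have := p.isLt; have := j.isLt; omega⟩).castSucc)
    (Finite.injective_iff_bijective.mp (by
      intro p p' hpp
      simp only [] at hpp
      split_ifs at hpp with a1 a2 a3 a4 a5 a6 a7 a8 a9 <;>
        first
          | exact absurd hpp (Fin.castSucc_lt_last _).ne
          | exact absurd hpp.symm (Fin.castSucc_lt_last _).ne
          | exact Fin.ext (by omega)
          | exact Fin.ext (by
              have hab := σ.injective (Fin.castSucc_injective _ hpp)
              rw [Fin.mk.injEq] at hab
              omega)))

lemma permIns_lt {n : ℕ} (j : Fin (n+1)) (σ : Equiv.Perm (Fin n)) (p : Fin (n+1))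
    (h : p.1 < j.1) (h' : p.1 < n) : permIns j σ p = (σ ⟨p.1, h'⟩).castSucc := by
  rw [permIns, Equiv.ofBijective_apply, dif_pos h]

lemma permIns_eq {n : ℕ} (j : Fin (n+1)) (σ : Equiv.Perm (Fin n)) (p : Fin (n+1))
    (h : p.1 = j.1) : permIns j σ p = Fin.last n := by
  rw [permIns, Equiv.ofBijective_apply, dif_neg (by omega), dif_pos h]

lemma permIns_gt {n : ℕ} (j : Fin (n+1)) (σ : Equiv.Perm (Fin n)) (p : Fin (n+1))
    (h : j.1 < p.1) (h' : p.1 - 1 < n) : permIns j σ p = (σ ⟨p.1 - 1, h'⟩).castSucc := by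
  rw [permIns, Equiv.ofBijective_apply, dif_neg (by omega), dif_neg (by omega)]

def signIns {n : ℕ} (j : Fin (n+1)) (s : Bool) (ε : Fin n → Bool) : Fin (n+1) → Bool :=
  fun p => if p.1 < j.1 then (if h : p.1 < n then ε ⟨p.1, h⟩ else false)
    else if p.1 = j.1 then s
    else (if h : p.1 - 1 < n then ε ⟨p.1 - 1, h⟩ else false)

noncomputable def insB {n : ℕ} (p : Bgrp n × Fin (n+1) × Bool) : Bgrp (n+1) :=
  (permIns p.2.1 p.1.1, signIns p.2.1 p.2.2 p.1.2)

def xval (n : ℕ) (s : Bool) : ℤ := if s then -((n : ℤ)+1) else (n : ℤ)+1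

lemma wordB_insB {n : ℕ} (β : Bgrp n) (j : Fin (n+1)) (s : Bool) :
    wordB (insB (β, j, s)) = (wordB β).insertIdx j.1 (xval n s) := by
  have hjn : j.1 ≤ n := by omega
  apply List.ext_getElem
  · rw [length_wordB, List.length_insertIdx_of_le_length (show j.1 ≤ (wordB β).length by simpa using hjn)]
    simp
  intro i hi hi'
  have hin : i < n + 1 := by simpa using hi
  have hL : (wordB (insB (β, j, s)))[i]'hi = wdw (insB (β, j, s)) ⟨i, hin⟩ := by
    simp only [wordB]
    exact List.getElem_ofFn _
  rw [hL]
  rcases lt_trichotomy i j.1 with hij | hij | hij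
  · have hin' : i < n := by omega
    rw [List.getElem_insertIdx_of_lt hij hi']
    have hR : (wordB β)[i]'(by rw [length_wordB]; omega) = wdw β ⟨i, hin'⟩ := by
      simp only [wordB]
      exact List.getElem_ofFn _
    rw [hR]
    unfold wdw insB
    simp only []
    rw [permIns_lt j β.1 ⟨i, hin⟩ hij hin']
    unfold signIns
    simp only [if_pos hij, dif_pos hin']
    rfl
  · subst hij
    rw [List.getElem_insertIdx_self hi']
    unfold wdw insB
    simp only []
    rw [permIns_eq j β.1 ⟨j.1, by omega⟩ rfl]
    unfold signIns xval
    simp only [if_neg (lt_irrefl j.1), if_pos rfl]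
    rcases s <;> simp [Fin.last]
  · have h1 : i - 1 < n := by omega
    have hgew := List.getElem_insertIdx_add_succ (wordB β) (xval n s) j.1 (i - 1 - j.1)
      (by rw [length_wordB]; omega)
    have hget : ((wordB β).insertIdx (j.1) (xval n s))[i]'hi'
        = (wordB β)[i-1]'(by rw [length_wordB]; omega) := by
      convert hgew using 2 <;> omega
    rw [hget]
    have hR : (wordB β)[i-1]'(by rw [length_wordB]; omega) = wdw β ⟨i - 1, h1⟩ := by
      simp only [wordB]
      exact List.getElem_ofFn _
    rw [hR]
    unfold wdw insB
    simp only []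
    rw [permIns_gt j β.1 ⟨i, hin⟩ hij h1]
    unfold signIns
    simp only [if_neg (by omega : ¬ i < j.1), if_neg (by omega : ¬ i = j.1), dif_pos h1]
    rfl



lemma xval_natAbs (n : ℕ) (s : Bool) : (xval n s).natAbs = n + 1 := by
  unfold xval; split_ifs <;> omega

lemma getD_insertIdx_self' (w : List ℤ) (x : ℤ) (j : ℕ) (h : j ≤ w.length) :
    (w.insertIdx j x).getD j 0 = x := by
  rw [List.getD_eq_getElem _ _ (by rw [List.length_insertIdx_of_le_length h]; omega)]
  exact List.getElem_insertIdx_self (by rw [List.length_insertIdx_of_le_length h]; omega)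

lemma getD_insertIdx_lt (w : List ℤ) (x : ℤ) (j i : ℕ) (hij : i < j) (h : j ≤ w.length) :
    (w.insertIdx j x).getD i 0 = w.getD i 0 := by
  rw [List.getD_eq_getElem _ _ (by rw [List.length_insertIdx_of_le_length h]; omega),
    List.getD_eq_getElem _ _ (by omega)]
  exact List.getElem_insertIdx_of_lt hij (by rw [List.length_insertIdx_of_le_length h]; omega)

lemma insert_ne_lt {n : ℕ} (β β' : Bgrp n) (j j' : Fin (n+1)) (s s' : Bool)
    (hw : (wordB β).insertIdx j.1 (xval n s) = (wordB β').insertIdx j'.1 (xval n s'))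
    (hlt : j.1 < j'.1) : False := by
  have e1 : ((wordB β).insertIdx j.1 (xval n s)).getD j.1 0 = xval n s :=
    getD_insertIdx_self' _ _ _ (by rw [length_wordB]; omega)
  have e2 : ((wordB β').insertIdx j'.1 (xval n s')).getD j.1 0 = (wordB β').getD j.1 0 :=
    getD_insertIdx_lt _ _ _ _ hlt (by rw [length_wordB]; omega)
  have e3 : xval n s = (wordB β').getD j.1 0 := by rw [← e1, hw, e2]
  have hjn : j.1 < n := by omega
  have hmem : (wordB β').getD j.1 0 ∈ wordB β' := by
    rw [List.getD_eq_getElem _ _ (by rw [length_wordB]; omega)]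
    exact List.getElem_mem _
  obtain ⟨h0, hle⟩ := wordB_entry β' _ hmem
  rw [← e3, xval_natAbs] at hle
  omega

lemma insB_injective {n : ℕ} : Function.Injective (insB (n := n)) := by
  rintro ⟨β, j, s⟩ ⟨β', j', s'⟩ h
  have hw := congrArg wordB h
  rw [wordB_insB, wordB_insB] at hw
  have hjj : j = j' := by
    rcases lt_trichotomy j.1 j'.1 with hlt | heq | hlt
    · exact absurd (insert_ne_lt β β' j j' s s' hw hlt) not_false
    · exact Fin.ext heq
    · exact absurd (insert_ne_lt β' β j' j s' s hw.symm hlt) not_false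
  subst hjj
  have e1 : ((wordB β).insertIdx j.1 (xval n s)).getD j.1 0 = xval n s :=
    getD_insertIdx_self' _ _ _ (by rw [length_wordB]; omega)
  have e2 : ((wordB β').insertIdx j.1 (xval n s')).getD j.1 0 = xval n s' :=
    getD_insertIdx_self' _ _ _ (by rw [length_wordB]; omega)
  have e3 : xval n s = xval n s' := by rw [← e1, hw, e2]
  have hss : s = s' := by
    rcases s <;> rcases s' <;>
      first
        | rfl
        | (exfalso
           unfold xval at e3
           rw [if_pos rfl, if_neg Bool.false_ne_true] at e3
           omega)
        | (exfalso
           unfold xval at e3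
           rw [if_neg Bool.false_ne_true, if_pos rfl] at e3
           omega)
  subst hss
  have hww : wordB β = wordB β' := by
    have h5 := congrArg (fun l => l.eraseIdx j.1) hw
    simpa only [List.eraseIdx_insertIdx_self] using h5
  have hbb : β = β' := wordB_injective hww
  subst hbb
  rfl

lemma card_Bgrp (m : ℕ) : Fintype.card (Bgrp m) = m.factorial * 2 ^ m := by
  rw [Fintype.card_prod, Fintype.card_perm, Fintype.card_fun, Fintype.card_fin,
    Fintype.card_bool]

lemma insB_bijective {n : ℕ} : Function.Bijective (insB (n := n)) := by
  rw [Fintype.bijective_iff_injective_and_card]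
  refine ⟨insB_injective, ?_⟩
  rw [Fintype.card_prod, card_Bgrp, Fintype.card_prod, Fintype.card_fin, Fintype.card_bool,
    card_Bgrp, Nat.factorial_succ]
  ring

lemma hyp_xval {n : ℕ} (β : Bgrp n) (s : Bool) :
    ∀ a ∈ wordB β, (precLt a (xval n s) ↔ ¬ precLt (xval n s) a) := by
  intro a ha
  obtain ⟨h0, hle⟩ := wordB_entry β a ha
  unfold xval precLt
  split_ifs <;> omega

lemma qpoly_eq (m : ℕ) :
    qpoly (2*(m+1)) (-X) = (1 - X) * ∑ k ∈ range (m+1), ((X : Polynomial ℤ)^2) ^ k := by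
  induction m with
  | zero =>
    rw [qpoly]
    rw [show 2*(0+1) = 2 from rfl, Finset.sum_range_succ, Finset.sum_range_one,
      Finset.sum_range_one]
    ring
  | succ m ih =>
    have he : ((-X : Polynomial ℤ)) ^ (2*(m+1)) = ((X:Polynomial ℤ)^2)^(m+1) := by
      rw [Even.neg_pow ⟨m+1, by ring⟩, ← pow_mul]
    have ho : ((-X : Polynomial ℤ)) ^ (2*(m+1)+1) = -(X * ((X:Polynomial ℤ)^2)^(m+1)) := by
      rw [Odd.neg_pow ⟨m+1, by ring⟩, pow_succ, ← pow_mul]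
      ring
    have h1 : ∑ k ∈ range (m+1+1), ((X:Polynomial ℤ)^2)^k
        = ∑ k ∈ range (m+1), ((X:Polynomial ℤ)^2)^k + (X^2)^(m+1) := Finset.sum_range_succ _ _
    rw [qpoly, show 2*(m+1+1) = 2*(m+1)+1+1 by ring, Finset.sum_range_succ,
      Finset.sum_range_succ, ← qpoly, ih, h1, he, ho]
    ring

lemma slot_sum {n : ℕ} (β : Bgrp n) :
    ∑ j : Fin (n+1), ∑ s : Bool,
      ((-1 : Polynomial ℤ) ^ N1 (insB (β, j, s)) * X ^ fmaj (insB (β, j, s)))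
    = ((-1 : Polynomial ℤ) ^ N1 β * X ^ fmaj β) * qpoly (2*(n+1)) (-X) := by
  have hneg : ∀ (j : Fin (n+1)) (s : Bool),
      negL ((wordB β).insertIdx j.1 (xval n s)) = negL (wordB β) + (if s then 1 else 0) := by
    intro j s
    rw [negL_insertIdx _ _ _ (by rw [length_wordB]; omega)]
    rcases s
    · rw [if_neg (show ¬ xval n false < 0 by
          unfold xval; rw [if_neg Bool.false_ne_true]; omega),
        if_neg Bool.false_ne_true]
    · rw [if_pos (show xval n true < 0 by unfold xval; rw [if_pos rfl]; omega), if_pos rfl]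
  have hstat : ∀ (j : Fin (n+1)) (s : Bool),
      ((-1 : Polynomial ℤ) ^ N1 (insB (β, j, s)) * X ^ fmaj (insB (β, j, s)))
      = ((-1 : Polynomial ℤ) ^ negL (wordB β) * (if s then -X else 1) * X ^ negL (wordB β)) *
        ((X^2) ^ majL ((wordB β).insertIdx j.1 (xval n s))) := by
    intro j s
    have hN : N1 (insB (β, j, s)) = negL (wordB β) + (if s then 1 else 0) := by
      rw [N1_eq, wordB_insB, hneg]
    have hf : fmaj (insB (β, j, s)) =
        2 * majL ((wordB β).insertIdx j.1 (xval n s))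
          + (negL (wordB β) + (if s then 1 else 0)) := by
      rw [fmaj_eq, wordB_insB, hneg]
    rw [hN, hf, pow_add, pow_add, pow_add, pow_mul]
    rcases s <;> simp <;> ring
  have hkey : ∀ s : Bool, ∑ j : Fin (n+1),
      ((X:Polynomial ℤ)^2) ^ majL ((wordB β).insertIdx j.1 (xval n s))
      = ((X:Polynomial ℤ)^2) ^ majL (wordB β) * ∑ k ∈ range (n+1), ((X:Polynomial ℤ)^2)^k := by
    intro s
    have hk := key (xval n s) (X^2) (wordB β) (hyp_xval β s)
    rw [length_wordB] at hk
    rw [Fin.sum_univ_eq_sum_range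
      (fun j => ((X:Polynomial ℤ)^2) ^ majL ((wordB β).insertIdx j (xval n s))) (n+1)]
    exact hk
  simp_rw [hstat]
  rw [Finset.sum_comm, Fintype.sum_bool, ← Finset.mul_sum, ← Finset.mul_sum,
    hkey true, hkey false, N1_eq, fmaj_eq, qpoly_eq, pow_add, pow_mul]
  simp only [if_true, Bool.false_eq_true, if_false]
  ring

theorem main : ∀ n : ℕ, ∑ β : Bgrp n, ((-1 : Polynomial ℤ) ^ N1 β * X ^ fmaj β)
    = ∏ i ∈ range n, qpoly (2*(i+1)) (-X) := by
  intro n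
  induction n with
  | zero =>
    rw [Finset.prod_range_zero]
    haveI : Unique (Bgrp 0) := uniqueOfSubsingleton
      (⟨(1 : Equiv.Perm (Fin 0)), fun _ => false⟩ : Bgrp 0)
    have hall : ∀ β : Bgrp 0, (-1 : Polynomial ℤ) ^ N1 β * X ^ fmaj β = 1 := by
      intro β
      have h1 : N1 β = 0 := by rw [N1, NegB]; simp
      have h2 : fmaj β = 0 := by rw [fmaj, majB, DesB, h1]; simp
      rw [h1, h2]; simp
    rw [Finset.sum_congr rfl (fun β _ => hall β), Finset.sum_const, Finset.card_univ,
      Fintype.card_unique]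
    simp
  | succ n ih =>
    rw [Finset.prod_range_succ, ← ih, Finset.sum_mul]
    rw [← Function.Bijective.sum_comp (insB_bijective (n := n))
      (fun β => (-1 : Polynomial ℤ) ^ N1 β * X ^ fmaj β)]
    rw [Fintype.sum_prod_type]
    refine Finset.sum_congr rfl fun β _ => ?_
    rw [Fintype.sum_prod_type]
    exact slot_sum β

end S7

/-- `∑_{β ∈ B_n} (-1)^{N₁ β} q^{fmaj β} = [2]_{-q}[4]_{-q} ⋯ [2n]_{-q}`. -/
theorem stmt7 (n : ℕ) (hn : 0 < n) :
    ∑ β : Bgrp n, (-1 : Polynomial ℤ) ^ N1 β * X ^ fmaj β =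
      ∏ i ∈ range n, qpoly (2*(i+1)) (-X) := by
  exact S7.main n
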